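/- Let X = W ⊕_a Z be the absolute sum of real Banach spaces W and Z with respect to an absolute norm N which is of type 1 or of type ∞ (so W is an absolute summand of X of type 1 or ∞). If W ⊕_a Z has the BPBp-nu for compact operators, then W has the BPBp-nu for compact operators. -/

import Mathlib

open Filter Topology

/-- `N` is an absolute norm on `ℝ²`: a norm with `N(1,0)=N(0,1)=1` and
`N(s,t)=N(|s|,|t|)`. -/
structure IsAbsoluteNorm (N : ℝ → ℝ → ℝ) : Prop where
  nonneg : ∀ s t : ℝ, 0 ≤ N s t
  eq_zero_iff : ∀ s t : ℝ, N s t = 0 ↔ s = 0 ∧ t = 0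
  triangle : ∀ s₁ t₁ s₂ t₂ : ℝ, N (s₁ + s₂) (t₁ + t₂) ≤ N s₁ t₁ + N s₂ t₂
  smul : ∀ c s t : ℝ, N (c * s) (c * t) = |c| * N s t
  one_zero : N 1 0 = 1
  zero_one : N 0 1 = 1
  abs_eq : ∀ s t : ℝ, N s t = N |s| |t|

/-- An absolute norm is of type 1 if `|x| + K|y| ≤ N(x,y)` for some `K > 0`. -/
def AbsNormTypeOne (N : ℝ → ℝ → ℝ) : Prop :=
  ∃ K : ℝ, 0 < K ∧ ∀ x y : ℝ, |x| + K * |y| ≤ N x y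

/-- An absolute norm is of type ∞ if `N(1,b₀) = 1` for some `b₀ > 0`. -/
def AbsNormTypeInfty (N : ℝ → ℝ → ℝ) : Prop :=
  ∃ b₀ : ℝ, 0 < b₀ ∧ N 1 b₀ = 1

/-- The numerical radius of a bounded linear operator on `X`:
`v(T) = sup {|x*(T x)| : ‖x‖ = ‖x*‖ = 1, x*(x) = 1}`. -/
noncomputable def NumRadius {X : Type*} [NormedAddCommGroup X] [NormedSpace ℝ X]
    (T : X →L[ℝ] X) : ℝ :=
  sSup {r : ℝ | ∃ (x : X) (f : X →L[ℝ] ℝ),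
    ‖x‖ = 1 ∧ ‖f‖ = 1 ∧ f x = 1 ∧ r = |f (T x)|}

/-- `X` has the Bishop–Phelps–Bollobás property for numerical radius for compact
operators. -/
def HasBPBnuCompact (X : Type*) [NormedAddCommGroup X] [NormedSpace ℝ X] : Prop :=
  ∀ ε : ℝ, 0 < ε → ∃ η : ℝ, 0 < η ∧
    ∀ (T : X →L[ℝ] X) (x : X) (f : X →L[ℝ] ℝ), IsCompactOperator (⇑T) →
      NumRadius T = 1 → ‖x‖ = 1 → ‖f‖ = 1 → f x = 1 → 1 - η < |f (T x)| →
      ∃ (S : X →L[ℝ] X) (x₀ : X) (f₀ : X →L[ℝ] ℝ), IsCompactOperator (⇑S) ∧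
        NumRadius S = 1 ∧ ‖x₀‖ = 1 ∧ ‖f₀‖ = 1 ∧ f₀ x₀ = 1 ∧
        |f₀ (S x₀)| = 1 ∧ ‖f₀ - f‖ < ε ∧ ‖x₀ - x‖ < ε ∧ ‖S - T‖ < ε

namespace IsAbsoluteNorm

variable {N : ℝ → ℝ → ℝ}

lemma fst_eq (hN : IsAbsoluteNorm N) (s : ℝ) : N s 0 = |s| := by
  have h := hN.smul s 1 0
  simpa [hN.one_zero] using h

lemma snd_eq (hN : IsAbsoluteNorm N) (t : ℝ) : N 0 t = |t| := by
  have h := hN.smul t 0 1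
  simpa [hN.zero_one] using h

lemma mono_left (hN : IsAbsoluteNorm N) {s s' t : ℝ} (hs : 0 ≤ s) (hss : s ≤ s') (ht : 0 ≤ t) :
    N s t ≤ N s' t := by
  rcases eq_or_lt_of_le (hs.trans hss) with h0 | h0
  · have hs0 : s = 0 := le_antisymm (hss.trans h0.ge) hs
    rw [hs0, ← h0]
  · set l : ℝ := (s' + s) / (2 * s') with hl
    have hl0 : 0 ≤ l := by positivity
    have hl1 : l ≤ 1 := by
      rw [hl, div_le_one (by positivity)]; linarith
    have e1 : l * s' + (1 - l) * (-s') = s := by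
      rw [hl]; field_simp; ring
    have e2 : l * t + (1 - l) * t = t := by ring
    have h1 := hN.triangle (l * s') (l * t) ((1 - l) * (-s')) ((1 - l) * t)
    rw [e1, e2] at h1
    have h2 : N (l * s') (l * t) = l * N s' t := by
      rw [hN.smul, abs_of_nonneg hl0]
    have h3 : N ((1 - l) * (-s')) ((1 - l) * t) = (1 - l) * N (-s') t := by
      rw [hN.smul, abs_of_nonneg (by linarith)]
    have h4 : N (-s') t = N s' t := by
      rw [hN.abs_eq (-s') t, abs_neg, ← hN.abs_eq]
    have h5 : l * N s' t + (1 - l) * N s' t = N s' t := by ring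
    rw [h2, h3, h4] at h1
    linarith

lemma mono_right (hN : IsAbsoluteNorm N) {s t t' : ℝ} (hs : 0 ≤ s) (ht : 0 ≤ t) (htt : t ≤ t') :
    N s t ≤ N s t' := by
  rcases eq_or_lt_of_le (ht.trans htt) with h0 | h0
  · have ht0 : t = 0 := le_antisymm (htt.trans h0.ge) ht
    rw [ht0, ← h0]
  · set l : ℝ := (t' + t) / (2 * t') with hl
    have hl0 : 0 ≤ l := by positivity
    have hl1 : l ≤ 1 := by
      rw [hl, div_le_one (by positivity)]; linarith
    have e1 : l * t' + (1 - l) * (-t') = t := by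
      rw [hl]; field_simp; ring
    have e2 : l * s + (1 - l) * s = s := by ring
    have h1 := hN.triangle (l * s) (l * t') ((1 - l) * s) ((1 - l) * (-t'))
    rw [e1, e2] at h1
    have h2 : N (l * s) (l * t') = l * N s t' := by
      rw [hN.smul, abs_of_nonneg hl0]
    have h3 : N ((1 - l) * s) ((1 - l) * (-t')) = (1 - l) * N s (-t') := by
      rw [hN.smul, abs_of_nonneg (by linarith)]
    have h4 : N s (-t') = N s t' := by
      rw [hN.abs_eq s (-t'), abs_neg, ← hN.abs_eq]
    rw [h2, h3, h4] at h1
    have h5 : l * N s t' + (1 - l) * N s t' = N s t' := by ring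
    linarith

lemma mono (hN : IsAbsoluteNorm N) {s s' t t' : ℝ} (hs : 0 ≤ s) (hss : s ≤ s') (ht : 0 ≤ t)
    (htt : t ≤ t') : N s t ≤ N s' t' :=
  (mono_left hN hs hss ht).trans (mono_right hN (hs.trans hss) ht htt)

lemma flat (hN : IsAbsoluteNorm N) {b s t : ℝ} (hb : 0 < b) (h1 : N 1 b = 1) (ht : 0 ≤ t)
    (hts : t ≤ b * s) : N s t = s := by
  have hs : 0 ≤ s := nonneg_of_mul_nonneg_right (ht.trans hts) hb
  apply le_antisymm
  · rcases eq_or_lt_of_le hs with h0 | h0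
    · have ht0 : t = 0 := le_antisymm (by rw [← h0] at hts; simpa using hts) ht
      rw [← h0, ht0]
      exact le_of_eq ((hN.eq_zero_iff 0 0).mpr ⟨rfl, rfl⟩)
    · set l : ℝ := t / (b * s) with hl
      have hl0 : 0 ≤ l := by positivity
      have hl1 : l ≤ 1 := by
        rw [hl, div_le_one (by positivity)]; linarith [hts]
      have e1 : (1 - l) * s + l * s = s := by ring
      have e2 : (1 - l) * 0 + l * (b * s) = t := by
        rw [hl]; field_simp; ring
      have h2 := hN.triangle ((1 - l) * s) ((1 - l) * 0) (l * s) (l * (b * s))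
      rw [e1, e2] at h2
      have h3 : N ((1 - l) * s) ((1 - l) * 0) = (1 - l) * s := by
        rw [hN.smul, fst_eq hN, abs_of_nonneg (by linarith), abs_of_nonneg hs]
      have h4 : N (l * s) (l * (b * s)) = l * s := by
        have e3 : l * s = l * (s * 1) := by ring
        have e4 : l * (b * s) = l * (s * b) := by ring
        rw [e3, e4, hN.smul, hN.smul, h1, abs_of_nonneg hl0, abs_of_nonneg hs]
        try ring
      rw [h3, h4] at h2
      linarith
  · have h5 : N s 0 ≤ N s t := mono_right hN hs le_rfl ht
    rwa [fst_eq hN, abs_of_nonneg hs] at h5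

end IsAbsoluteNorm

section RadHelpers

variable {Y : Type*} [NormedAddCommGroup Y] [NormedSpace ℝ Y]

lemma numRadius_set_bdd (T : Y →L[ℝ] Y) :
    ∀ r ∈ {r : ℝ | ∃ (x : Y) (f : Y →L[ℝ] ℝ),
      ‖x‖ = 1 ∧ ‖f‖ = 1 ∧ f x = 1 ∧ r = |f (T x)|}, r ≤ ‖T‖ := by
  rintro r ⟨x, f, hx, hf, hfx, rfl⟩
  calc |f (T x)| = ‖f (T x)‖ := (Real.norm_eq_abs _).symm
    _ ≤ ‖f‖ * ‖T x‖ := f.le_opNorm _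
    _ ≤ 1 * (‖T‖ * ‖x‖) := by rw [hf]; gcongr; exact T.le_opNorm x
    _ = ‖T‖ := by rw [hx]; ring

lemma le_numRadius (T : Y →L[ℝ] Y) {x : Y} {f : Y →L[ℝ] ℝ}
    (hx : ‖x‖ = 1) (hf : ‖f‖ = 1) (hfx : f x = 1) : |f (T x)| ≤ NumRadius T :=
  le_csSup ⟨‖T‖, fun r hr => numRadius_set_bdd T r hr⟩ ⟨x, f, hx, hf, hfx, rfl⟩

lemma numRadius_le (T : Y →L[ℝ] Y) {c : ℝ} (hc : 0 ≤ c)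
    (H : ∀ (x : Y) (f : Y →L[ℝ] ℝ), ‖x‖ = 1 → ‖f‖ = 1 → f x = 1 → |f (T x)| ≤ c) :
    NumRadius T ≤ c :=
  Real.sSup_le (by rintro r ⟨x, f, hx, hf, hfx, rfl⟩; exact H x f hx hf hfx) hc

lemma exists_almost_norming (f : Y →L[ℝ] ℝ) {δ : ℝ} (hδ : 0 < δ) :
    ∃ y : Y, ‖y‖ ≤ 1 ∧ ‖f‖ - δ ≤ f y := by
  rcases lt_or_ge (‖f‖ - δ) 0 with h | h
  · exact ⟨0, by simp, by simp; linarith⟩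
  · have hlt : ‖f‖ - δ < ‖f‖ := by linarith
    obtain ⟨y, hy1, hy2⟩ := f.exists_lt_apply_of_lt_opNorm hlt
    rw [Real.norm_eq_abs] at hy2
    rcases le_or_gt 0 (f y) with hy | hy
    · exact ⟨y, hy1.le, by rw [abs_of_nonneg hy] at hy2; linarith⟩
    · refine ⟨-y, by rw [norm_neg]; exact hy1.le, ?_⟩
      rw [abs_of_neg hy] at hy2
      rw [map_neg]
      linarith

end RadHelpers

set_option maxHeartbeats 1000000 in
theorem bpbnu_compact_absolute_summand (W Z X : Type*)
    [NormedAddCommGroup W] [NormedSpace ℝ W] [CompleteSpace W]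
    [NormedAddCommGroup Z] [NormedSpace ℝ Z] [CompleteSpace Z]
    [NormedAddCommGroup X] [NormedSpace ℝ X] [CompleteSpace X]
    (N : ℝ → ℝ → ℝ) (hN : IsAbsoluteNorm N)
    (e : X ≃L[ℝ] W × Z) (he : ∀ x : X, ‖x‖ = N ‖(e x).1‖ ‖(e x).2‖)
    (htype : AbsNormTypeOne N ∨ AbsNormTypeInfty N)
    (h : HasBPBnuCompact X) : HasBPBnuCompact W := by
  classical
  obtain ⟨c, hc, hcase⟩ : ∃ c : ℝ, 0 < c ∧
      ((∀ x y : ℝ, |x| + c * |y| ≤ N x y) ∨ N 1 c = 1) := by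
    rcases htype with ⟨K, hK, hK2⟩ | ⟨b, hb, hb2⟩
    · exact ⟨K, hK, Or.inl hK2⟩
    · exact ⟨b, hb, Or.inr hb2⟩
  intro ε hε
  set ε' : ℝ := min (ε / 2) (min (c / 2) (1 / 2)) with hε'def
  have hε'pos : 0 < ε' := by
    apply lt_min (by linarith)
    exact lt_min (by linarith) (by norm_num)
  have hε'ε : ε' ≤ ε / 2 := min_le_left _ _
  have hε'c : ε' ≤ c / 2 := (min_le_right _ _).trans (min_le_left _ _)
  have hε'1 : ε' ≤ 1 / 2 := (min_le_right _ _).trans (min_le_right _ _)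
  obtain ⟨η, hη, hBPB⟩ := h ε' hε'pos
  refine ⟨η, hη, ?_⟩
  intro T x f hTc hvT hx hf hfx hTx
  -- the canonical operators
  set P : X →L[ℝ] W := (ContinuousLinearMap.fst ℝ W Z).comp (e : X →L[ℝ] W × Z) with hPdef
  set Q : X →L[ℝ] Z := (ContinuousLinearMap.snd ℝ W Z).comp (e : X →L[ℝ] W × Z) with hQdef
  set ι : W →L[ℝ] X :=
    (e.symm : W × Z →L[ℝ] X).comp (ContinuousLinearMap.inl ℝ W Z) with hιdef
  set ιZ : Z →L[ℝ] X :=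
    (e.symm : W × Z →L[ℝ] X).comp (ContinuousLinearMap.inr ℝ W Z) with hιZdef
  have hP : ∀ y : X, P y = (e y).1 := by intro y; simp [hPdef]
  have hQ : ∀ y : X, Q y = (e y).2 := by intro y; simp [hQdef]
  have hι : ∀ w' : W, ι w' = e.symm (w', 0) := by intro w'; simp [hιdef]
  have hιZ : ∀ z' : Z, ιZ z' = e.symm (0, z') := by intro z'; simp [hιZdef]
  have heι : ∀ w' : W, e (ι w') = (w', 0) := by
    intro w'; rw [hι, e.apply_symm_apply]
  have heιZ : ∀ z' : Z, e (ιZ z') = (0, z') := by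
    intro z'; rw [hιZ, e.apply_symm_apply]
  have hPι : ∀ w' : W, P (ι w') = w' := by intro w'; rw [hP, heι]
  have hQι : ∀ w' : W, Q (ι w') = 0 := by intro w'; rw [hQ, heι]
  have hPιZ : ∀ z' : Z, P (ιZ z') = 0 := by intro z'; rw [hP, heιZ]
  have hQιZ : ∀ z' : Z, Q (ιZ z') = z' := by intro z'; rw [hQ, heιZ]
  have hsymm_norm : ∀ (w' : W) (z' : Z), ‖(e.symm (w', z') : X)‖ = N ‖w'‖ ‖z'‖ := by
    intro w' z'; rw [he (e.symm (w', z')), e.apply_symm_apply]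
  have hιnorm : ∀ w' : W, ‖ι w'‖ = ‖w'‖ := by
    intro w'
    rw [hι, hsymm_norm, norm_zero, hN.fst_eq, abs_of_nonneg (norm_nonneg _)]
  have hιZnorm : ∀ z' : Z, ‖ιZ z'‖ = ‖z'‖ := by
    intro z'
    rw [hιZ, hsymm_norm, norm_zero, hN.snd_eq, abs_of_nonneg (norm_nonneg _)]
  have hNy : ∀ y : X, N ‖P y‖ ‖Q y‖ = ‖y‖ := by
    intro y; rw [hP, hQ, ← he]
  have hPle : ∀ y : X, ‖P y‖ ≤ ‖y‖ := by
    intro y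
    calc ‖P y‖ = N ‖P y‖ 0 := by rw [hN.fst_eq, abs_of_nonneg (norm_nonneg _)]
      _ ≤ N ‖P y‖ ‖Q y‖ := hN.mono_right (norm_nonneg _) le_rfl (norm_nonneg _)
      _ = ‖y‖ := hNy y
  have hQle : ∀ y : X, ‖Q y‖ ≤ ‖y‖ := by
    intro y
    calc ‖Q y‖ = N 0 ‖Q y‖ := by rw [hN.snd_eq, abs_of_nonneg (norm_nonneg _)]
      _ ≤ N ‖P y‖ ‖Q y‖ := hN.mono_left le_rfl (norm_nonneg _) (norm_nonneg _)
      _ = ‖y‖ := hNy y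
  have hPop : ‖P‖ ≤ 1 := P.opNorm_le_bound zero_le_one (fun y => by rw [one_mul]; exact hPle y)
  have hιop : ‖ι‖ ≤ 1 := ι.opNorm_le_bound zero_le_one
    (fun w' => by rw [one_mul, hιnorm])
  have hιZop : ‖ιZ‖ ≤ 1 := ιZ.opNorm_le_bound zero_le_one
    (fun z' => by rw [one_mul, hιZnorm])
  have hsplit : ∀ (a : W) (b : Z), (e.symm (a, b) : X) = ι a + ιZ b := by
    intro a b
    rw [hι, hιZ, ← map_add]
    congr 1
    simp [Prod.ext_iff]
  have hdecomp : ∀ y : X, ι (P y) + ιZ (Q y) = y := by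
    intro y
    rw [← hsplit, hP, hQ]
    exact e.symm_apply_apply y
  -- the extended operator
  set Tt : X →L[ℝ] X := ι.comp (T.comp P) with hTtdef
  have hTtapp : ∀ y : X, Tt y = ι (T (P y)) := fun y => rfl
  have hTtc : IsCompactOperator ⇑Tt := by
    have h1 : IsCompactOperator (⇑T ∘ ⇑P) := hTc.comp_clm P
    exact h1.clm_comp ι
  -- Hölder-type inequality
  have hHolder : ∀ (u : X) (g : X →L[ℝ] ℝ), ‖u‖ = 1 → ‖g‖ ≤ 1 →
      ‖g.comp ι‖ * ‖P u‖ + ‖g.comp ιZ‖ * ‖Q u‖ ≤ 1 := by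
    intro u g hu hg
    refine le_of_forall_pos_le_add ?_
    intro δ hδ
    obtain ⟨w'', hw''1, hw''2⟩ := exists_almost_norming (g.comp ι) (half_pos hδ)
    obtain ⟨z'', hz''1, hz''2⟩ := exists_almost_norming (g.comp ιZ) (half_pos hδ)
    set y : X := e.symm (‖P u‖ • w'', ‖Q u‖ • z'') with hy
    have hyn : ‖y‖ ≤ 1 := by
      rw [hy, hsymm_norm, norm_smul, norm_smul, Real.norm_eq_abs, Real.norm_eq_abs,
        abs_of_nonneg (norm_nonneg _), abs_of_nonneg (norm_nonneg _)]
      calc N (‖P u‖ * ‖w''‖) (‖Q u‖ * ‖z''‖) ≤ N ‖P u‖ ‖Q u‖ := by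
            apply hN.mono (by positivity) ?_ (by positivity) ?_
            · exact mul_le_of_le_one_right (norm_nonneg _) hw''1
            · exact mul_le_of_le_one_right (norm_nonneg _) hz''1
        _ = ‖u‖ := hNy u
        _ = 1 := hu
    have hgy : g y = ‖P u‖ * ((g.comp ι) w'') + ‖Q u‖ * ((g.comp ιZ) z'') := by
      rw [hy, hsplit]
      simp only [map_add, map_smul, smul_eq_mul, ContinuousLinearMap.comp_apply]
    have hgyle : g y ≤ 1 := by
      refine le_trans (le_abs_self _) ?_
      rw [← Real.norm_eq_abs]
      calc ‖g y‖ ≤ ‖g‖ * ‖y‖ := g.le_opNorm y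
        _ ≤ 1 * 1 := mul_le_mul hg hyn (norm_nonneg _) zero_le_one
        _ = 1 := one_mul 1
    have h1 : ‖P u‖ * (‖g.comp ι‖ - δ/2) ≤ ‖P u‖ * ((g.comp ι) w'') :=
      mul_le_mul_of_nonneg_left hw''2 (norm_nonneg _)
    have h2 : ‖Q u‖ * (‖g.comp ιZ‖ - δ/2) ≤ ‖Q u‖ * ((g.comp ιZ) z'') :=
      mul_le_mul_of_nonneg_left hz''2 (norm_nonneg _)
    have h3 : ‖P u‖ ≤ 1 := by rw [← hu]; exact hPle u
    have h4 : ‖Q u‖ ≤ 1 := by rw [← hu]; exact hQle u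
    have h5 : 0 ≤ ‖P u‖ := norm_nonneg _
    have h6 : 0 ≤ ‖Q u‖ := norm_nonneg _
    nlinarith [mul_le_mul_of_nonneg_right h3 (by linarith : (0:ℝ) ≤ δ/2),
      mul_le_mul_of_nonneg_right h4 (by linarith : (0:ℝ) ≤ δ/2)]
  -- norm bounds for restricted functionals
  have hcompι : ∀ g : X →L[ℝ] ℝ, ‖g.comp ι‖ ≤ ‖g‖ := fun g =>
    le_trans (g.opNorm_comp_le ι) (mul_le_of_le_one_right (norm_nonneg g) hιop)
  have hcompιZ : ∀ g : X →L[ℝ] ℝ, ‖g.comp ιZ‖ ≤ ‖g‖ := fun g =>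
    le_trans (g.opNorm_comp_le ιZ) (mul_le_of_le_one_right (norm_nonneg g) hιZop)
  have hgdecomp : ∀ (g : X →L[ℝ] ℝ) (y : X), g y = (g.comp ι) (P y) + (g.comp ιZ) (Q y) := by
    intro g y
    conv_lhs => rw [← hdecomp y]
    rw [map_add]
    simp only [ContinuousLinearMap.comp_apply]
  -- state equality
  have hstate_eq : ∀ (u : X) (g : X →L[ℝ] ℝ), ‖u‖ = 1 → ‖g‖ = 1 → g u = 1 →
      (g.comp ι) (P u) = ‖g.comp ι‖ * ‖P u‖ := by
    intro u g hu hg hgu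
    have hdec : (g.comp ι) (P u) + (g.comp ιZ) (Q u) = 1 := by
      rw [← hgdecomp, hgu]
    have h1 : (g.comp ι) (P u) ≤ ‖g.comp ι‖ * ‖P u‖ :=
      le_trans (le_abs_self _) (by rw [← Real.norm_eq_abs]; exact (g.comp ι).le_opNorm _)
    have h2 : (g.comp ιZ) (Q u) ≤ ‖g.comp ιZ‖ * ‖Q u‖ :=
      le_trans (le_abs_self _) (by rw [← Real.norm_eq_abs]; exact (g.comp ιZ).le_opNorm _)
    have h3 := hHolder u g hu hg.le
    linarith
  -- NumRadius of the extension is 1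
  have hTtle : ∀ (u : X) (g : X →L[ℝ] ℝ), ‖u‖ = 1 → ‖g‖ = 1 → g u = 1 → |g (Tt u)| ≤ 1 := by
    intro u g hu hg hgu
    have hval : g (Tt u) = (g.comp ι) (T (P u)) := rfl
    by_cases hw0 : P u = 0
    · rw [hval, hw0]; simp
    by_cases hgι0 : g.comp ι = 0
    · rw [hval, hgι0]; simp
    have hwn : ‖P u‖ ≠ 0 := norm_ne_zero_iff.mpr hw0
    have hgn : ‖g.comp ι‖ ≠ 0 := norm_ne_zero_iff.mpr hgι0
    set x₁ : W := ‖P u‖⁻¹ • P u with hx₁def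
    set f₁ : W →L[ℝ] ℝ := ‖g.comp ι‖⁻¹ • g.comp ι with hf₁def
    have hx₁ : ‖x₁‖ = 1 := norm_smul_inv_norm hw0
    have hf₁ : ‖f₁‖ = 1 := norm_smul_inv_norm hgι0
    have hse := hstate_eq u g hu hg hgu
    have hf₁x₁ : f₁ x₁ = 1 := by
      have hcalc : f₁ x₁ = ‖g.comp ι‖⁻¹ * (‖P u‖⁻¹ * ((g.comp ι) (P u))) := by
        rw [hf₁def, hx₁def]
        simp [map_smul, smul_eq_mul]
        ring
      rw [hcalc, hse]
      field_simp
    have hle := le_numRadius T hx₁ hf₁ hf₁x₁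
    rw [hvT] at hle
    have hexpand : |g (Tt u)| = ‖g.comp ι‖ * ‖P u‖ * |f₁ (T x₁)| := by
      rw [hval]
      have hcalc : f₁ (T x₁) = ‖g.comp ι‖⁻¹ * (‖P u‖⁻¹ * ((g.comp ι) (T (P u)))) := by
        rw [hf₁def, hx₁def]
        simp [map_smul, smul_eq_mul]
        ring
      rw [hcalc, abs_mul, abs_mul, abs_inv, abs_inv,
        abs_of_nonneg (norm_nonneg (g.comp ι)), abs_of_nonneg (norm_nonneg (P u))]
      field_simp
      try ring
    rw [hexpand]
    have h1 : ‖g.comp ι‖ ≤ 1 := by rw [← hg]; exact hcompι g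
    have h2 : ‖P u‖ ≤ 1 := by rw [← hu]; exact hPle u
    have hab : ‖g.comp ι‖ * ‖P u‖ ≤ 1 := mul_le_one₀ h1 (norm_nonneg _) h2
    calc ‖g.comp ι‖ * ‖P u‖ * |f₁ (T x₁)| ≤ 1 * 1 :=
          mul_le_mul hab hle (abs_nonneg _) zero_le_one
      _ = 1 := one_mul 1
  have hvTt : NumRadius Tt = 1 := by
    refine le_antisymm (numRadius_le Tt zero_le_one hTtle) ?_
    have hne : {r : ℝ | ∃ (x' : W) (f' : W →L[ℝ] ℝ),
        ‖x'‖ = 1 ∧ ‖f'‖ = 1 ∧ f' x' = 1 ∧ r = |f' (T x')|}.Nonempty := by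
      by_contra hcon
      rw [Set.not_nonempty_iff_eq_empty] at hcon
      have h0 : NumRadius T = 0 := by unfold NumRadius; rw [hcon]; exact Real.sSup_empty
      rw [hvT] at h0; norm_num at h0
    have hsub : {r : ℝ | ∃ (x' : W) (f' : W →L[ℝ] ℝ),
        ‖x'‖ = 1 ∧ ‖f'‖ = 1 ∧ f' x' = 1 ∧ r = |f' (T x')|} ⊆
        {r : ℝ | ∃ (x' : X) (f' : X →L[ℝ] ℝ),
        ‖x'‖ = 1 ∧ ‖f'‖ = 1 ∧ f' x' = 1 ∧ r = |f' (Tt x')|} := by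
      rintro r ⟨x', f', hx', hf', hfx', rfl⟩
      have hval1 : (f'.comp P) (ι x') = 1 := by
        rw [ContinuousLinearMap.comp_apply, hPι, hfx']
      refine ⟨ι x', f'.comp P, by rw [hιnorm]; exact hx', ?_, hval1, ?_⟩
      · refine le_antisymm (le_trans (f'.opNorm_comp_le P)
          (by rw [hf', one_mul]; exact hPop)) ?_
        have h2 := (f'.comp P).le_opNorm (ι x')
        rw [hval1, hιnorm, hx', mul_one] at h2
        simpa using h2
      · rw [hTtapp, ContinuousLinearMap.comp_apply, hPι, hPι]
    calc (1:ℝ) = NumRadius T := hvT.symm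
      _ ≤ NumRadius Tt :=
        csSup_le_csSup ⟨‖Tt‖, fun r hr => numRadius_set_bdd Tt r hr⟩ hne hsub
  -- apply the BPB property of X
  have hfP1 : ‖f.comp P‖ = 1 := by
    have hval1 : (f.comp P) (ι x) = 1 := by
      rw [ContinuousLinearMap.comp_apply, hPι, hfx]
    refine le_antisymm (le_trans (f.opNorm_comp_le P) (by rw [hf, one_mul]; exact hPop)) ?_
    have h2 := (f.comp P).le_opNorm (ι x)
    rw [hval1, hιnorm, hx, mul_one] at h2
    simpa using h2
  have hfPx : (f.comp P) (ι x) = 1 := by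
    rw [ContinuousLinearMap.comp_apply, hPι, hfx]
  have hval0 : 1 - η < |(f.comp P) (Tt (ι x))| := by
    have : (f.comp P) (Tt (ι x)) = f (T x) := by
      rw [hTtapp, ContinuousLinearMap.comp_apply, hPι, hPι]
    rw [this]; exact hTx
  obtain ⟨S, u, g, hSc, hvS, hu, hg, hgu, hatt, hgf, hux, hST⟩ :=
    hBPB Tt (ι x) (f.comp P) hTtc hvTt (by rw [hιnorm]; exact hx) hfP1 hfPx hval0
  -- common estimates
  have hz : ‖Q u‖ < ε' := by
    have h1 : Q u = Q (u - ι x) := by rw [map_sub, hQι, sub_zero]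
    rw [h1]; exact lt_of_le_of_lt (hQle _) hux
  have hwx : ‖P u - x‖ < ε' := by
    have h1 : P u - x = P (u - ι x) := by rw [map_sub, hPι]
    rw [h1]; exact lt_of_le_of_lt (hPle _) hux
  have hzs : ‖g.comp ιZ‖ < ε' := by
    have h1 : g.comp ιZ = (g - f.comp P).comp ιZ := by
      ext z'; simp [hPιZ]
    rw [h1]
    exact lt_of_le_of_lt (le_trans ((g - f.comp P).opNorm_comp_le ιZ)
      (mul_le_of_le_one_right (norm_nonneg _) hιZop)) hgf
  have hws : ‖g.comp ι - f‖ < ε' := by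
    have h1 : g.comp ι - f = (g - f.comp P).comp ι := by
      ext w'; simp [hPι]
    rw [h1]
    exact lt_of_le_of_lt (le_trans ((g - f.comp P).opNorm_comp_le ι)
      (mul_le_of_le_one_right (norm_nonneg _) hιop)) hgf
  have hgu1 : (g.comp ι) (P u) + (g.comp ιZ) (Q u) = 1 := by
    rw [← hgdecomp, hgu]
  have hwle1 : ‖P u‖ ≤ 1 := by rw [← hu]; exact hPle u
  have hgιle1 : ‖g.comp ι‖ ≤ 1 := by rw [← hg]; exact hcompι g
  have habs1 : (g.comp ι) (P u) ≤ ‖g.comp ι‖ * ‖P u‖ :=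
    le_trans (le_abs_self _) (by rw [← Real.norm_eq_abs]; exact (g.comp ι).le_opNorm _)
  have habs2 : (g.comp ιZ) (Q u) ≤ ‖g.comp ιZ‖ * ‖Q u‖ :=
    le_trans (le_abs_self _) (by rw [← Real.norm_eq_abs]; exact (g.comp ιZ).le_opNorm _)
  rcases hcase with hK | hb
  · -- type 1 case
    have hNle : ‖P u‖ + c * ‖Q u‖ ≤ 1 := by
      have h1 := hK ‖P u‖ ‖Q u‖
      rw [abs_of_nonneg (norm_nonneg _), abs_of_nonneg (norm_nonneg _)] at h1
      refine h1.trans (le_of_eq ?_)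
      rw [hNy u, hu]
    have h3 : (g.comp ιZ) (Q u) ≤ ε' * ‖Q u‖ :=
      le_trans habs2 (mul_le_mul_of_nonneg_right hzs.le (norm_nonneg _))
    have h2 : (g.comp ι) (P u) ≤ ‖P u‖ :=
      le_trans habs1 (mul_le_of_le_one_left (norm_nonneg _) hgιle1)
    have hq : Q u = 0 := by
      by_contra hq0
      have hqpos : 0 < ‖Q u‖ := norm_pos_iff.mpr hq0
      have t1 : ε' * ‖Q u‖ ≤ c / 2 * ‖Q u‖ :=
        mul_le_mul_of_nonneg_right hε'c (norm_nonneg _)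
      have t2 : 0 < c / 2 * ‖Q u‖ := mul_pos (half_pos hc) hqpos
      linarith only [hgu1, h2, h3, hNle, t1, t2]
    have hw1 : ‖P u‖ = 1 := by
      have hh := hNy u
      rw [hq, norm_zero, hN.fst_eq, abs_of_nonneg (norm_nonneg _), hu] at hh
      exact hh
    have hqz : (g.comp ιZ) (Q u) = 0 := by rw [hq, map_zero]
    have hattst : (g.comp ι) (P u) = 1 := by linarith
    have hgι1 : ‖g.comp ι‖ = 1 := by
      refine le_antisymm hgιle1 ?_
      have hh := (g.comp ι).le_opNorm (P u)
      rw [hattst, hw1, mul_one] at hh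
      simpa using hh
    have huw : u = ι (P u) := by
      conv_lhs => rw [← hdecomp u]
      rw [hq, map_zero, add_zero]
    set R : X →L[ℝ] W := P + ((g.comp ιZ).comp Q).smulRight (P u) with hRdef
    set S₀ : W →L[ℝ] W := R.comp (S.comp ι) with hS₀def
    have hS₀app : ∀ w', S₀ w' = P (S (ι w')) + (g.comp ιZ) (Q (S (ι w'))) • (P u) := by
      intro w'
      rw [hS₀def, hRdef]
      simp only [ContinuousLinearMap.comp_apply, ContinuousLinearMap.add_apply,
        ContinuousLinearMap.smulRight_apply]
    have hS₀c : IsCompactOperator ⇑S₀ := by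
      have h1 : IsCompactOperator (⇑S ∘ ⇑ι) := hSc.comp_clm ι
      exact h1.clm_comp R
    have hattf : (g.comp ι) (S₀ (P u)) = g (S u) := by
      rw [hS₀app, map_add, map_smul, smul_eq_mul, hattst, mul_one, ← huw]
      exact (hgdecomp g (S u)).symm
    have hatt₀ : |(g.comp ι) (S₀ (P u))| = 1 := by rw [hattf]; exact hatt
    have hvle : NumRadius S₀ ≤ 1 := by
      refine numRadius_le S₀ zero_le_one ?_
      intro w' φ hw' hφ hφw'
      set Ψ : X →L[ℝ] ℝ := φ.comp P + (φ (P u)) • ((g.comp ιZ).comp Q) with hΨdef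
      have hΨapp : ∀ y, Ψ y = φ (P y) + φ (P u) * (g.comp ιZ) (Q y) := by
        intro y
        rw [hΨdef]
        simp only [ContinuousLinearMap.add_apply, ContinuousLinearMap.comp_apply,
          ContinuousLinearMap.smul_apply, smul_eq_mul]
      have hΨι : Ψ (ι w') = 1 := by
        rw [hΨapp, hPι, hQι, map_zero, mul_zero, add_zero, hφw']
      have hφx₀ : |φ (P u)| ≤ 1 := by
        have hh := φ.le_opNorm (P u)
        rw [hφ, one_mul, hw1] at hh
        simpa using hh
      have hΨle : ‖Ψ‖ ≤ 1 := by
        refine Ψ.opNorm_le_bound zero_le_one (fun y => ?_)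
        rw [one_mul, hΨapp, Real.norm_eq_abs]
        have ha : |φ (P y)| ≤ ‖P y‖ := by
          have hh := φ.le_opNorm (P y)
          rw [hφ, one_mul] at hh
          simpa using hh
        have hb' : |(g.comp ιZ) (Q y)| ≤ ε' * ‖Q y‖ := by
          have hh := (g.comp ιZ).le_opNorm (Q y)
          rw [Real.norm_eq_abs] at hh
          exact hh.trans (mul_le_mul_of_nonneg_right hzs.le (norm_nonneg _))
        have hc2 : |φ (P u) * (g.comp ιZ) (Q y)| ≤ ε' * ‖Q y‖ := by
          rw [abs_mul]
          calc |φ (P u)| * |(g.comp ιZ) (Q y)| ≤ 1 * (ε' * ‖Q y‖) :=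
                mul_le_mul hφx₀ hb' (abs_nonneg _) zero_le_one
            _ = ε' * ‖Q y‖ := one_mul _
        have hd : |φ (P y) + φ (P u) * (g.comp ιZ) (Q y)| ≤ ‖P y‖ + ε' * ‖Q y‖ := by
          calc |φ (P y) + φ (P u) * (g.comp ιZ) (Q y)|
              ≤ |φ (P y)| + |φ (P u) * (g.comp ιZ) (Q y)| := abs_add_le _ _
            _ ≤ ‖P y‖ + ε' * ‖Q y‖ := add_le_add ha hc2
        refine hd.trans ?_
        have he2 := hK ‖P y‖ ‖Q y‖
        rw [abs_of_nonneg (norm_nonneg _), abs_of_nonneg (norm_nonneg _)] at he2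
        have he3 : ε' * ‖Q y‖ ≤ c * ‖Q y‖ := by
          apply mul_le_mul_of_nonneg_right _ (norm_nonneg _)
          linarith
        calc ‖P y‖ + ε' * ‖Q y‖ ≤ ‖P y‖ + c * ‖Q y‖ := by linarith
          _ ≤ N ‖P y‖ ‖Q y‖ := he2
          _ = ‖y‖ := hNy y
      have hΨ1 : ‖Ψ‖ = 1 := by
        refine le_antisymm hΨle ?_
        have hh := Ψ.le_opNorm (ι w')
        rw [hΨι, hιnorm, hw', mul_one] at hh
        simpa using hh
      have hvaleq : φ (S₀ w') = Ψ (S (ι w')) := by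
        rw [hS₀app, map_add, map_smul, smul_eq_mul, hΨapp]
        ring
      rw [hvaleq]
      have hh := le_numRadius S (x := ι w') (f := Ψ) (by rw [hιnorm, hw']) hΨ1 hΨι
      rwa [hvS] at hh
    have hvge : (1:ℝ) ≤ NumRadius S₀ := by
      have hh := le_numRadius S₀ hw1 hgι1 hattst
      rwa [hatt₀] at hh
    have hvS₀ : NumRadius S₀ = 1 := le_antisymm hvle hvge
    have hSTle : ‖S₀ - T‖ < ε := by
      have hbnd : ∀ w', ‖(S₀ - T) w'‖ ≤ (‖S - Tt‖ * (1 + ε')) * ‖w'‖ := by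
        intro w'
        have hPTt : P (Tt (ι w')) = T w' := by rw [hTtapp, hPι, hPι]
        have hQTt : Q (Tt (ι w')) = 0 := by rw [hTtapp, hQι]
        have e1 : (S₀ - T) w' =
            P ((S - Tt) (ι w')) + (g.comp ιZ) (Q ((S - Tt) (ι w'))) • (P u) := by
          rw [ContinuousLinearMap.sub_apply, hS₀app, ContinuousLinearMap.sub_apply,
            map_sub, map_sub, hPTt, hQTt, sub_zero]
          abel
        rw [e1]
        have hn1 : ‖P ((S - Tt) (ι w'))‖ ≤ ‖(S - Tt) (ι w')‖ := hPle _
        have hn2 : ‖(g.comp ιZ) (Q ((S - Tt) (ι w'))) • (P u)‖ ≤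
            ε' * ‖(S - Tt) (ι w')‖ := by
          rw [norm_smul, Real.norm_eq_abs, hw1, mul_one]
          have hh := (g.comp ιZ).le_opNorm (Q ((S - Tt) (ι w')))
          rw [Real.norm_eq_abs] at hh
          refine hh.trans ?_
          exact mul_le_mul hzs.le (hQle _) (norm_nonneg _) hε'pos.le
        have hn3 : ‖(S - Tt) (ι w')‖ ≤ ‖S - Tt‖ * ‖w'‖ := by
          have hh := (S - Tt).le_opNorm (ι w')
          rwa [hιnorm] at hh
        calc ‖P ((S - Tt) (ι w')) + (g.comp ιZ) (Q ((S - Tt) (ι w'))) • (P u)‖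
            ≤ ‖P ((S - Tt) (ι w'))‖ + ‖(g.comp ιZ) (Q ((S - Tt) (ι w'))) • (P u)‖ :=
              norm_add_le _ _
          _ ≤ ‖(S - Tt) (ι w')‖ + ε' * ‖(S - Tt) (ι w')‖ := add_le_add hn1 hn2
          _ = (1 + ε') * ‖(S - Tt) (ι w')‖ := by ring
          _ ≤ (1 + ε') * (‖S - Tt‖ * ‖w'‖) :=
              mul_le_mul_of_nonneg_left hn3 (by linarith)
          _ = (‖S - Tt‖ * (1 + ε')) * ‖w'‖ := by ring
      have hop : ‖S₀ - T‖ ≤ ‖S - Tt‖ * (1 + ε') :=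
        (S₀ - T).opNorm_le_bound
          (mul_nonneg (norm_nonneg _) (by linarith)) hbnd
      have hlt : ‖S - Tt‖ * (1 + ε') < ε' * (1 + ε') :=
        mul_lt_mul_of_pos_right hST (by linarith)
      have hfin : ε' * (1 + ε') ≤ ε := by
        have q1 : ε' * (1 + ε') ≤ ε' * (3/2) :=
          mul_le_mul_of_nonneg_left (by linarith only [hε'1]) hε'pos.le
        have q2 : ε' * (3/2) ≤ ε / 2 * (3/2) :=
          mul_le_mul_of_nonneg_right hε'ε (by norm_num)
        linarith only [q1, q2, hε]
      linarith
    refine ⟨S₀, P u, g.comp ι, hS₀c, hvS₀, hw1, hgι1, hattst, hatt₀, ?_, ?_, hSTle⟩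
    · exact lt_of_lt_of_le hws (by linarith)
    · exact lt_of_lt_of_le hwx (by linarith)
  · -- type ∞ case
    have hdual : ‖g.comp ι‖ + c * ‖g.comp ιZ‖ ≤ 1 := by
      by_contra hcon
      push_neg at hcon
      set δ : ℝ := (‖g.comp ι‖ + c * ‖g.comp ιZ‖ - 1) / 2 with hδdef
      have hδ : 0 < δ := by rw [hδdef]; linarith only [hcon]
      obtain ⟨w'', hw''1, hw''2⟩ := exists_almost_norming (g.comp ι) (half_pos hδ)
      have hδc : 0 < δ / (2 * c) := by positivity
      obtain ⟨z'', hz''1, hz''2⟩ := exists_almost_norming (g.comp ιZ) hδc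
      set y : X := e.symm (w'', c • z'') with hy
      have hyn : ‖y‖ ≤ 1 := by
        rw [hy, hsymm_norm, norm_smul, Real.norm_eq_abs, abs_of_nonneg hc.le]
        calc N ‖w''‖ (c * ‖z''‖) ≤ N 1 c := by
              apply hN.mono (norm_nonneg _) hw''1 (by positivity)
              exact mul_le_of_le_one_right hc.le hz''1
          _ = 1 := hb
      have hgy : g y = (g.comp ι) w'' + c * ((g.comp ιZ) z'') := by
        rw [hy, hsplit]
        simp only [map_add, map_smul, smul_eq_mul, ContinuousLinearMap.comp_apply]
      have hgyle : g y ≤ 1 := by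
        refine le_trans (le_abs_self _) ?_
        rw [← Real.norm_eq_abs]
        calc ‖g y‖ ≤ ‖g‖ * ‖y‖ := g.le_opNorm y
          _ ≤ 1 * 1 := mul_le_mul hg.le hyn (norm_nonneg _) zero_le_one
          _ = 1 := one_mul 1
      have t2 : c * (‖g.comp ιZ‖ - δ / (2 * c)) ≤ c * ((g.comp ιZ) z'') :=
        mul_le_mul_of_nonneg_left hz''2 hc.le
      have t3 : c * (δ / (2 * c)) = δ / 2 := by
        field_simp
      have t4 : c * (‖g.comp ιZ‖ - δ / (2 * c)) = c * ‖g.comp ιZ‖ - δ / 2 := by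
        rw [mul_sub, t3]
      have hfin : ‖g.comp ι‖ + c * ‖g.comp ιZ‖ ≤ 1 + δ := by
        linarith only [hgy, hgyle, hw''2, t2, t4]
      rw [hδdef] at hfin
      linarith only [hfin, hcon]
    have hzstar : g.comp ιZ = 0 := by
      by_contra h0
      have hpos : 0 < ‖g.comp ιZ‖ := norm_pos_iff.mpr h0
      have t1 : (g.comp ι) (P u) ≤ ‖g.comp ι‖ :=
        le_trans habs1 (mul_le_of_le_one_right (norm_nonneg _) hwle1)
      have t2 : ‖g.comp ιZ‖ * ‖Q u‖ ≤ ‖g.comp ιZ‖ * (c / 2) := by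
        apply mul_le_mul_of_nonneg_left _ (norm_nonneg _)
        linarith only [hz, hε'c]
      have t3 : 0 < ‖g.comp ιZ‖ * (c / 2) := mul_pos hpos (half_pos hc)
      linarith only [hgu1, t1, habs2, t2, hdual, t3]
    have hqz : (g.comp ιZ) (Q u) = 0 := by rw [hzstar]; simp
    have hattst : (g.comp ι) (P u) = 1 := by linarith only [hgu1, hqz]
    have haux : (1:ℝ) ≤ ‖g.comp ι‖ * ‖P u‖ := by linarith only [habs1, hattst]
    have hw1 : ‖P u‖ = 1 := by
      refine le_antisymm hwle1 ?_
      have t1 : ‖g.comp ι‖ * ‖P u‖ ≤ 1 * ‖P u‖ :=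
        mul_le_mul_of_nonneg_right hgιle1 (norm_nonneg _)
      linarith only [haux, t1]
    have hgι1 : ‖g.comp ι‖ = 1 := by
      refine le_antisymm hgιle1 ?_
      have t1 : ‖g.comp ι‖ * ‖P u‖ ≤ ‖g.comp ι‖ * 1 :=
        mul_le_mul_of_nonneg_left hwle1 (norm_nonneg _)
      linarith only [haux, t1]
    set J : W →L[ℝ] X := (e.symm : W × Z →L[ℝ] X).comp
      (ContinuousLinearMap.inl ℝ W Z +
        (ContinuousLinearMap.inr ℝ W Z).comp ((g.comp ι).smulRight (Q u))) with hJdef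
    have hJapp : ∀ w', J w' = e.symm (w', (g.comp ι) w' • Q u) := by
      intro w'
      rw [hJdef]
      simp only [ContinuousLinearMap.comp_apply, ContinuousLinearMap.add_apply,
        ContinuousLinearMap.inl_apply, ContinuousLinearMap.inr_apply,
        ContinuousLinearMap.smulRight_apply, ContinuousLinearEquiv.coe_coe]
      congr 1
      rw [Prod.mk_add_mk, add_zero, zero_add]
    have hJnorm : ∀ w', ‖J w'‖ = ‖w'‖ := by
      intro w'
      rw [hJapp, hsymm_norm, norm_smul, Real.norm_eq_abs]
      apply hN.flat hc hb (by positivity)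
      have t1 : |(g.comp ι) w'| ≤ ‖w'‖ := by
        have hh := (g.comp ι).le_opNorm w'
        rw [Real.norm_eq_abs, hgι1, one_mul] at hh
        exact hh
      have t2 : ‖Q u‖ ≤ c := by linarith only [hz, hε'c, hc]
      calc |(g.comp ι) w'| * ‖Q u‖ ≤ ‖w'‖ * c :=
            mul_le_mul t1 t2 (norm_nonneg _) (norm_nonneg _)
        _ = c * ‖w'‖ := mul_comm _ _
    have hPJ : ∀ w', P (J w') = w' := by
      intro w'
      rw [hJapp, hP, e.apply_symm_apply]
    have hJx₀ : J (P u) = u := by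
      rw [hJapp, hattst, one_smul]
      apply e.injective
      rw [e.apply_symm_apply, hP, hQ]
    set S₀ : W →L[ℝ] W := P.comp (S.comp J) with hS₀def
    have hS₀app : ∀ w', S₀ w' = P (S (J w')) := fun w' => rfl
    have hS₀c : IsCompactOperator ⇑S₀ := by
      have h1 : IsCompactOperator (⇑S ∘ ⇑J) := hSc.comp_clm J
      exact h1.clm_comp P
    have hattf : (g.comp ι) (S₀ (P u)) = g (S u) := by
      rw [hS₀app, hJx₀, hgdecomp g (S u), hzstar, ContinuousLinearMap.zero_apply,
        add_zero]
    have hatt₀ : |(g.comp ι) (S₀ (P u))| = 1 := by rw [hattf]; exact hatt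
    have hvle : NumRadius S₀ ≤ 1 := by
      refine numRadius_le S₀ zero_le_one ?_
      intro w' φ hw' hφ hφw'
      have hval2 : φ (S₀ w') = (φ.comp P) (S (J w')) := rfl
      have hst1 : ‖J w'‖ = 1 := by rw [hJnorm, hw']
      have hst2 : (φ.comp P) (J w') = 1 := by
        rw [ContinuousLinearMap.comp_apply, hPJ, hφw']
      have hst3 : ‖φ.comp P‖ = 1 := by
        refine le_antisymm (le_trans (φ.opNorm_comp_le P)
          (by rw [hφ, one_mul]; exact hPop)) ?_
        have hh := (φ.comp P).le_opNorm (J w')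
        rw [hst2, hst1, mul_one] at hh
        simpa using hh
      rw [hval2]
      have hh := le_numRadius S (x := J w') (f := φ.comp P) hst1 hst3 hst2
      rwa [hvS] at hh
    have hvge : (1:ℝ) ≤ NumRadius S₀ := by
      have hh := le_numRadius S₀ hw1 hgι1 hattst
      rwa [hatt₀] at hh
    have hvS₀ : NumRadius S₀ = 1 := le_antisymm hvle hvge
    have hSTle : ‖S₀ - T‖ < ε := by
      have hbnd : ∀ w', ‖(S₀ - T) w'‖ ≤ ‖S - Tt‖ * ‖w'‖ := by
        intro w'
        have hPTt : P (Tt (J w')) = T w' := by rw [hTtapp, hPι, hPJ]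
        have e1 : (S₀ - T) w' = P ((S - Tt) (J w')) := by
          rw [ContinuousLinearMap.sub_apply, ContinuousLinearMap.sub_apply, map_sub,
            hPTt, hS₀app]
        rw [e1]
        have hh := (S - Tt).le_opNorm (J w')
        rw [hJnorm] at hh
        exact le_trans (hPle _) hh
      have hop : ‖S₀ - T‖ ≤ ‖S - Tt‖ :=
        (S₀ - T).opNorm_le_bound (norm_nonneg _) hbnd
      have hee : ε' ≤ ε := by linarith only [hε'ε, hε]
      linarith only [hop, hST, hee]
    refine ⟨S₀, P u, g.comp ι, hS₀c, hvS₀, hw1, hgι1, hattst, hatt₀, ?_, ?_, hSTle⟩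
    · exact lt_of_lt_of_le hws (by linarith only [hε'ε, hε])
    · exact lt_of_lt_of_le hwx (by linarith only [hε'ε, hε])
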